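/- Let Δ, Λ₁, Λ₂ : ℝ⁴ → ℂ be C² with Δ vanishing nowhere. For j = 1, 2 define Υ_j := i·( Δ·Δ·Δ̄·(Λ̄_j)_z + Δ·Δ̄·Λ₁·(Λ̄_j)_{u₁} + Δ·Δ̄·Λ₂·(Λ̄_j)_{u₂} − Δ·Δ·(Δ̄)_z·Λ̄_j − Δ·Λ₁·(Δ̄)_{u₁}·Λ̄_j − Δ·Λ₂·(Δ̄)_{u₂}·Λ̄_j − Δ·Δ̄·Δ̄·(Λ_j)_{z̄} − Δ·Δ̄·Λ̄₁·(Λ_j)_{u₁} − Δ·Δ̄·Λ̄₂·(Λ_j)_{u₂} + Δ̄·Δ̄·Δ_{z̄}·Λ_j + Δ̄·Λ̄₁·Δ_{u₁}·Λ_j + Δ̄·Λ̄₂·Δ_{u₂}·Λ_j ), and define the operator T f := (Υ₁/(Δ² Δ̄²)) f_{u₁} + (Υ₂/(Δ² Δ̄²)) f_{u₂}. Then for every C² function f : ℝ⁴ → ℂ one has L(T f) − T(L f) = (Π₁/(Δ⁴ Δ̄³)) f_{u₁} + (Π₂/(Δ⁴ Δ̄³)) f_{u₂}, where for j = 1, 2: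 Π_j := Δ·Δ·Δ̄·(Υ_j)_z + Δ·Δ̄·Λ₁·(Υ_j)_{u₁} + Δ·Δ̄·Λ₂·(Υ_j)_{u₂} − 2Δ·Δ̄·Δ_z·Υ_j − 2Δ̄·Λ₁·Δ_{u₁}·Υ_j − 2Δ̄·Λ₂·Δ_{u₂}·Υ_j − 2Δ·Δ·(Δ̄)_z·Υ_j − 2Δ·Λ₁·(Δ̄)_{u₁}·Υ_j − 2Δ·Λ₂·(Δ̄)_{u₂}·Υ_j − Δ·Δ̄·Υ₁·(Λ_j)_{u₁} − Δ·Δ̄·Υ₂·(Λ_j)_{u₂} + Δ̄·Υ₁·Δ_{u₁}·Λ_j + Δ̄·Υ₂·Δ_{u₂}·Λ_j. (This is the paper's Lemma giving S = [L, T] explicitly for General Class II.) -/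

import Mathlib

noncomputable section
open Complex ComplexConjugate

/-- Points of `ℝ⁴`, with coordinates `(x, y, u₁, u₂)` and `z = x + i y`. -/
abbrev V4 := Fin 4 → ℝ

/-- Partial derivative in the `j`-th coordinate direction. -/
def pd (j : Fin 4) (f : V4 → ℂ) : V4 → ℂ := fun p => fderiv ℝ f p (Pi.single j 1)

/-- Wirtinger derivative `f_z := (f_x − i f_y)/2`. -/
def wz (f : V4 → ℂ) : V4 → ℂ := fun p => (pd 0 f p - I * pd 1 f p) / 2

/-- Wirtinger derivative `f_z̄ := (f_x + i f_y)/2`. -/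
def wzb (f : V4 → ℂ) : V4 → ℂ := fun p => (pd 0 f p + I * pd 1 f p) / 2

/-- Partial derivative `f_{u₁}`. -/
def du1 (f : V4 → ℂ) : V4 → ℂ := pd 2 f

/-- Partial derivative `f_{u₂}`. -/
def du2 (f : V4 → ℂ) : V4 → ℂ := pd 3 f

variable (Δ Λ₁ Λ₂ : V4 → ℂ)

/-- The operator `L f := f_z + (Λ₁/Δ) f_{u₁} + (Λ₂/Δ) f_{u₂}`. -/
def Lop (f : V4 → ℂ) : V4 → ℂ := fun p =>
  wz f p + Λ₁ p / Δ p * du1 f p + Λ₂ p / Δ p * du2 f p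

/-- The conjugate operator `L̄ f := f_z̄ + (Λ̄₁/Δ̄) f_{u₁} + (Λ̄₂/Δ̄) f_{u₂}`. -/
def Lbop (f : V4 → ℂ) : V4 → ℂ := fun p =>
  wzb f p + conj (Λ₁ p) / conj (Δ p) * du1 f p + conj (Λ₂ p) / conj (Δ p) * du2 f p

/-- The numerator `Υ` associated to one of the `Λ` coefficients. -/
def Ups (Λ : V4 → ℂ) : V4 → ℂ := fun p =>
  I * (Δ p * Δ p * conj (Δ p) * wz (fun q => conj (Λ q)) p
      + Δ p * conj (Δ p) * Λ₁ p * du1 (fun q => conj (Λ q)) p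
      + Δ p * conj (Δ p) * Λ₂ p * du2 (fun q => conj (Λ q)) p
      - Δ p * Δ p * wz (fun q => conj (Δ q)) p * conj (Λ p)
      - Δ p * Λ₁ p * du1 (fun q => conj (Δ q)) p * conj (Λ p)
      - Δ p * Λ₂ p * du2 (fun q => conj (Δ q)) p * conj (Λ p)
      - Δ p * conj (Δ p) * conj (Δ p) * wzb Λ p
      - Δ p * conj (Δ p) * conj (Λ₁ p) * du1 Λ p
      - Δ p * conj (Δ p) * conj (Λ₂ p) * du2 Λ p
      + conj (Δ p) * conj (Δ p) * wzb Δ p * Λ p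
      + conj (Δ p) * conj (Λ₁ p) * du1 Δ p * Λ p
      + conj (Δ p) * conj (Λ₂ p) * du2 Δ p * Λ p)


/-- The operator `T f := (Υ₁/(Δ² Δ̄²)) f_{u₁} + (Υ₂/(Δ² Δ̄²)) f_{u₂}`. -/
def Tof (f : V4 → ℂ) : V4 → ℂ := fun p =>
  Ups Δ Λ₁ Λ₂ Λ₁ p / (Δ p ^ 2 * conj (Δ p) ^ 2) * du1 f p
    + Ups Δ Λ₁ Λ₂ Λ₂ p / (Δ p ^ 2 * conj (Δ p) ^ 2) * du2 f p

/-- The numerator `Π` associated to one of the `Λ` coefficients. -/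
def Pii (Λ : V4 → ℂ) : V4 → ℂ := fun p =>
  Δ p * Δ p * conj (Δ p) * wz (Ups Δ Λ₁ Λ₂ Λ) p
    + Δ p * conj (Δ p) * Λ₁ p * du1 (Ups Δ Λ₁ Λ₂ Λ) p
    + Δ p * conj (Δ p) * Λ₂ p * du2 (Ups Δ Λ₁ Λ₂ Λ) p
    - 2 * (Δ p) * conj (Δ p) * wz Δ p * Ups Δ Λ₁ Λ₂ Λ p
    - 2 * conj (Δ p) * Λ₁ p * du1 Δ p * Ups Δ Λ₁ Λ₂ Λ p
    - 2 * conj (Δ p) * Λ₂ p * du2 Δ p * Ups Δ Λ₁ Λ₂ Λ p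
    - 2 * (Δ p) * Δ p * wz (fun q => conj (Δ q)) p * Ups Δ Λ₁ Λ₂ Λ p
    - 2 * (Δ p) * Λ₁ p * du1 (fun q => conj (Δ q)) p * Ups Δ Λ₁ Λ₂ Λ p
    - 2 * (Δ p) * Λ₂ p * du2 (fun q => conj (Δ q)) p * Ups Δ Λ₁ Λ₂ Λ p
    - Δ p * conj (Δ p) * Ups Δ Λ₁ Λ₂ Λ₁ p * du1 Λ p
    - Δ p * conj (Δ p) * Ups Δ Λ₁ Λ₂ Λ₂ p * du2 Λ p
    + conj (Δ p) * Ups Δ Λ₁ Λ₂ Λ₁ p * du1 Δ p * Λ p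
    + conj (Δ p) * Ups Δ Λ₁ Λ₂ Λ₂ p * du2 Δ p * Λ p

namespace Helper
variable {f g : V4 → ℂ} {p : V4} {j : Fin 4}

lemma pd_add (hf : DifferentiableAt ℝ f p) (hg : DifferentiableAt ℝ g p) :
    pd j (fun q => f q + g q) p = pd j f p + pd j g p := by
  unfold pd; rw [fderiv_fun_add hf hg]; simp

lemma pd_sub (hf : DifferentiableAt ℝ f p) (hg : DifferentiableAt ℝ g p) :
    pd j (fun q => f q - g q) p = pd j f p - pd j g p := by
  unfold pd; rw [fderiv_fun_sub hf hg]; simp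

lemma pd_mul (hf : DifferentiableAt ℝ f p) (hg : DifferentiableAt ℝ g p) :
    pd j (fun q => f q * g q) p = pd j f p * g p + f p * pd j g p := by
  unfold pd; rw [fderiv_fun_mul hf hg]
  simp only [ContinuousLinearMap.add_apply, ContinuousLinearMap.smul_apply, smul_eq_mul]
  ring

lemma pd_const_mul (c : ℂ) (hf : DifferentiableAt ℝ f p) :
    pd j (fun q => c * f q) p = c * pd j f p := by
  unfold pd; rw [fderiv_const_mul hf]; simp

lemma pd_div_const (c : ℂ) (hf : DifferentiableAt ℝ f p) :
    pd j (fun q => f q / c) p = pd j f p / c := by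
  have e : (fun q => f q / c) = fun q => c⁻¹ * f q := by funext q; ring
  rw [e, pd_const_mul _ hf, inv_mul_eq_div]

lemma pd_inv (hg : DifferentiableAt ℝ g p) (h0 : g p ≠ 0) :
    pd j (fun q => (g q)⁻¹) p = -(pd j g p / g p ^ 2) := by
  have h := ((hasFDerivAt_inv' (𝕜 := ℝ) h0).comp p hg.hasFDerivAt)
  unfold pd
  rw [show (fun q => (g q)⁻¹) = Inv.inv ∘ g from rfl, h.fderiv]
  simp only [ContinuousLinearMap.comp_apply, ContinuousLinearMap.neg_apply,
    ContinuousLinearMap.mulLeftRight_apply]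
  ring

lemma pd_div (hf : DifferentiableAt ℝ f p) (hg : DifferentiableAt ℝ g p) (h0 : g p ≠ 0) :
    pd j (fun q => f q / g q) p = (pd j f p * g p - f p * pd j g p) / g p ^ 2 := by
  have e : (fun q => f q / g q) = fun q => f q * (fun r => (g r)⁻¹) q := by
    funext q; simp [div_eq_mul_inv]
  rw [e, pd_mul hf (show DifferentiableAt ℝ (fun r => (g r)⁻¹) p from hg.inv h0), pd_inv hg h0]
  field_simp
  ring

lemma pd_symm (hf : ContDiff ℝ 2 f) (i j : Fin 4) (p : V4) :
    pd i (pd j f) p = pd j (pd i f) p := by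
  have hd : DifferentiableAt ℝ (fderiv ℝ f) p :=
    ((hf.fderiv_right (m := 1) (by norm_num)).differentiable one_ne_zero) p
  have e : ∀ v w : V4, fderiv ℝ (fun q => fderiv ℝ f q w) p v
      = fderiv ℝ (fderiv ℝ f) p v w := by
    intro v w
    rw [fderiv_clm_apply hd (differentiableAt_const w)]
    simp
  unfold pd
  rw [e, e]
  exact (hf.contDiffAt.isSymmSndFDerivAt (by norm_num)) _ _

lemma contDiff_pd (hf : ContDiff ℝ 2 f) (j : Fin 4) : ContDiff ℝ 1 (pd j f) :=
  (hf.fderiv_right (m := 1) (by norm_num)).clm_apply contDiff_const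

lemma diffAt_pd (hf : ContDiff ℝ 2 f) (j : Fin 4) (p : V4) :
    DifferentiableAt ℝ (pd j f) p :=
  ((contDiff_pd hf j).differentiable one_ne_zero) p

lemma contDiff_conj {n : ℕ∞} (hf : ContDiff ℝ n f) :
    ContDiff ℝ n (fun q => conj (f q)) := by
  have h := (Complex.conjCLE.toContinuousLinearMap.contDiff (n := n)).comp hf
  exact h

lemma contDiff_wz (hf : ContDiff ℝ 2 f) : ContDiff ℝ 1 (wz f) :=
  (((contDiff_pd hf 0).sub (contDiff_const.mul (contDiff_pd hf 1)))).div_const 2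

lemma contDiff_wzb (hf : ContDiff ℝ 2 f) : ContDiff ℝ 1 (wzb f) :=
  (((contDiff_pd hf 0).add (contDiff_const.mul (contDiff_pd hf 1)))).div_const 2

end Helper

namespace Helper

lemma contDiff_Ups {Λ : V4 → ℂ} (hΔ : ContDiff ℝ 2 Δ) (hΛ₁ : ContDiff ℝ 2 Λ₁)
    (hΛ₂ : ContDiff ℝ 2 Λ₂) (hΛ : ContDiff ℝ 2 Λ) : ContDiff ℝ 1 (Ups Δ Λ₁ Λ₂ Λ) := by
  have h2cΔ : ContDiff ℝ 2 (fun q => conj (Δ q)) := contDiff_conj hΔ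
  have h2cΛ : ContDiff ℝ 2 (fun q => conj (Λ q)) := contDiff_conj hΛ
  have hΔ1 : ContDiff ℝ 1 Δ := hΔ.of_le one_le_two
  have hΛ₁1 : ContDiff ℝ 1 Λ₁ := hΛ₁.of_le one_le_two
  have hΛ₂1 : ContDiff ℝ 1 Λ₂ := hΛ₂.of_le one_le_two
  have hΛ1 : ContDiff ℝ 1 Λ := hΛ.of_le one_le_two
  have hcΔ1 : ContDiff ℝ 1 (fun q => conj (Δ q)) := h2cΔ.of_le one_le_two
  have hcΛ₁1 : ContDiff ℝ 1 (fun q => conj (Λ₁ q)) := (contDiff_conj hΛ₁).of_le one_le_two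
  have hcΛ₂1 : ContDiff ℝ 1 (fun q => conj (Λ₂ q)) := (contDiff_conj hΛ₂).of_le one_le_two
  have hcΛ1 : ContDiff ℝ 1 (fun q => conj (Λ q)) := h2cΛ.of_le one_le_two
  have t1 := ((hΔ1.mul hΔ1).mul hcΔ1).mul (contDiff_wz h2cΛ)
  have t2 := ((hΔ1.mul hcΔ1).mul hΛ₁1).mul (contDiff_pd h2cΛ 2)
  have t3 := ((hΔ1.mul hcΔ1).mul hΛ₂1).mul (contDiff_pd h2cΛ 3)
  have t4 := ((hΔ1.mul hΔ1).mul (contDiff_wz h2cΔ)).mul hcΛ1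
  have t5 := ((hΔ1.mul hΛ₁1).mul (contDiff_pd h2cΔ 2)).mul hcΛ1
  have t6 := ((hΔ1.mul hΛ₂1).mul (contDiff_pd h2cΔ 3)).mul hcΛ1
  have t7 := ((hΔ1.mul hcΔ1).mul hcΔ1).mul (contDiff_wzb hΛ)
  have t8 := ((hΔ1.mul hcΔ1).mul hcΛ₁1).mul (contDiff_pd hΛ 2)
  have t9 := ((hΔ1.mul hcΔ1).mul hcΛ₂1).mul (contDiff_pd hΛ 3)
  have t10 := ((hcΔ1.mul hcΔ1).mul (contDiff_wzb hΔ)).mul hΛ1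
  have t11 := ((hcΔ1.mul hcΛ₁1).mul (contDiff_pd hΔ 2)).mul hΛ1
  have t12 := ((hcΔ1.mul hcΛ₂1).mul (contDiff_pd hΔ 3)).mul hΛ1
  exact contDiff_const.mul
    (((((((((((t1.add t2).add t3).sub t4).sub t5).sub t6).sub t7).sub t8).sub t9).add
      t10).add t11).add t12)

lemma pd_sq_sq (hΔ : ContDiff ℝ 2 Δ) (p : V4) (j : Fin 4) :
    pd j (fun q => Δ q ^ 2 * conj (Δ q) ^ 2) p
      = 2 * Δ p * conj (Δ p) ^ 2 * pd j Δ p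
        + 2 * Δ p ^ 2 * conj (Δ p) * pd j (fun q => conj (Δ q)) p := by
  have h1 : DifferentiableAt ℝ Δ p := (hΔ.differentiable two_ne_zero) p
  have h2 : DifferentiableAt ℝ (fun q => conj (Δ q)) p :=
    ((contDiff_conj hΔ).differentiable two_ne_zero) p
  have e : (fun q => Δ q ^ 2 * conj (Δ q) ^ 2)
      = fun q => (Δ q * Δ q) * ((fun r => conj (Δ r)) q * (fun r => conj (Δ r)) q) := by
    funext q; ring
  rw [e, pd_mul (h1.fun_mul h1) (h2.fun_mul h2), pd_mul h1 h1, pd_mul h2 h2]; ring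

end Helper

namespace Helper

set_option maxHeartbeats 2000000 in
lemma coeff {Λ : V4 → ℂ} (hΔ : ContDiff ℝ 2 Δ) (hΛ₁ : ContDiff ℝ 2 Λ₁)
    (hΛ₂ : ContDiff ℝ 2 Λ₂) (hΛ : ContDiff ℝ 2 Λ) (hΔ0 : ∀ p, Δ p ≠ 0) (p : V4) :
    (pd 0 (fun q => Ups Δ Λ₁ Λ₂ Λ q / (Δ q ^ 2 * conj (Δ q) ^ 2)) p
        - I * pd 1 (fun q => Ups Δ Λ₁ Λ₂ Λ q / (Δ q ^ 2 * conj (Δ q) ^ 2)) p) / 2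
      + Λ₁ p / Δ p * pd 2 (fun q => Ups Δ Λ₁ Λ₂ Λ q / (Δ q ^ 2 * conj (Δ q) ^ 2)) p
      + Λ₂ p / Δ p * pd 3 (fun q => Ups Δ Λ₁ Λ₂ Λ q / (Δ q ^ 2 * conj (Δ q) ^ 2)) p
      - Ups Δ Λ₁ Λ₂ Λ₁ p / (Δ p ^ 2 * conj (Δ p) ^ 2) * pd 2 (fun q => Λ q / Δ q) p
      - Ups Δ Λ₁ Λ₂ Λ₂ p / (Δ p ^ 2 * conj (Δ p) ^ 2) * pd 3 (fun q => Λ q / Δ q) p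
      = Pii Δ Λ₁ Λ₂ Λ p / (Δ p ^ 4 * conj (Δ p) ^ 3) := by
  have hUd : DifferentiableAt ℝ (Ups Δ Λ₁ Λ₂ Λ) p :=
    ((contDiff_Ups Δ Λ₁ Λ₂ hΔ hΛ₁ hΛ₂ hΛ).differentiable one_ne_zero) p
  have hΔd : DifferentiableAt ℝ Δ p := hΔ.differentiable two_ne_zero p
  have hcΔd : DifferentiableAt ℝ (fun q => conj (Δ q)) p :=
    ((contDiff_conj hΔ).differentiable two_ne_zero) p
  have hΛd : DifferentiableAt ℝ Λ p := hΛ.differentiable two_ne_zero p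
  have hDd : DifferentiableAt ℝ (fun q => Δ q ^ 2 * conj (Δ q) ^ 2) p :=
    (hΔd.pow 2).mul (hcΔd.pow 2)
  have hc0 : conj (Δ p) ≠ 0 := by
    simpa using hΔ0 p
  have hD0 : Δ p ^ 2 * conj (Δ p) ^ 2 ≠ 0 :=
    mul_ne_zero (pow_ne_zero _ (hΔ0 p)) (pow_ne_zero _ hc0)
  simp only [pd_div hUd hDd hD0, pd_div hΛd hΔd (hΔ0 p), pd_sq_sq Δ hΔ]
  unfold Pii
  simp only [wz, du1, du2]
  simp only [div_eq_mul_inv, mul_inv, ← inv_pow]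
  linear_combination ((((Δ p)⁻¹)^2 * ((conj (Δ p))⁻¹)^3 * (Ups Δ Λ₁ Λ₂ Λ p) * (pd 0 (fun q => conj (Δ q)) p) + (-1:ℂ) * ((Δ p)⁻¹)^2 * ((conj (Δ p))⁻¹)^3 * (I) * (Ups Δ Λ₁ Λ₂ Λ p) * (pd 1 (fun q => conj (Δ q)) p) + (-1:ℂ) * ((Δ p)⁻¹)^3 * ((conj (Δ p))⁻¹)^2 * (Ups Δ Λ₁ Λ₂ Λ₂ p) * (pd 3 Λ p) + (-1:ℂ) * ((Δ p)⁻¹)^3 * ((conj (Δ p))⁻¹)^2 * (Ups Δ Λ₁ Λ₂ Λ₁ p) * (pd 2 Λ p) + (2:ℂ) * ((Δ p)⁻¹)^3 * ((conj (Δ p))⁻¹)^3 * (Ups Δ Λ₁ Λ₂ Λ p) * (Λ₂ p) * (pd 3 (fun q => conj (Δ q)) p) + (2:ℂ) * ((Δ p)⁻¹)^3 * ((conj (Δ p))⁻¹)^3 * (Ups Δ Λ₁ Λ₂ Λ p) * (Λ₁ p) * (pd 2 (fun q => conj (Δ q)) p) + (-1/2:ℂ) * (conj (Δ p)) * ((Δ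 p)⁻¹)^2 * ((conj (Δ p))⁻¹)^3 * (pd 0 (Ups Δ Λ₁ Λ₂ Λ) p) + (1/2:ℂ) * (conj (Δ p)) * ((Δ p)⁻¹)^2 * ((conj (Δ p))⁻¹)^3 * (I) * (pd 1 (Ups Δ Λ₁ Λ₂ Λ) p) + (-1:ℂ) * (conj (Δ p)) * ((Δ p)⁻¹)^2 * ((conj (Δ p))⁻¹)^4 * (Ups Δ Λ₁ Λ₂ Λ p) * (pd 0 (fun q => conj (Δ q)) p) + (conj (Δ p)) * ((Δ p)⁻¹)^2 * ((conj (Δ p))⁻¹)^4 * (I) * (Ups Δ Λ₁ Λ₂ Λ p) * (pd 1 (fun q => conj (Δ q)) p) + (-1:ℂ) * (conj (Δ p)) * ((Δ p)⁻¹)^3 * ((conj (Δ p))⁻¹)^3 * (Λ₂ p) * (pd 3 (Ups Δ Λ₁ Λ₂ Λ) p) + (-1:ℂ) * (conj (Δ p)) * ((Δ p)⁻¹)^3 * ((conj (Δ p))⁻¹)^3 * (Λ₁ p) * (pd 2 (Ups Δ Λ₁ Λ₂ Λ) p) + (conj (Δ p)) * ((Δ p)⁻¹)^3 * ((conj (Δ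 p))⁻¹)^3 * (Ups Δ Λ₁ Λ₂ Λ₂ p) * (pd 3 Λ p) + (conj (Δ p)) * ((Δ p)⁻¹)^3 * ((conj (Δ p))⁻¹)^3 * (Ups Δ Λ₁ Λ₂ Λ₁ p) * (pd 2 Λ p) + (conj (Δ p)) * ((Δ p)⁻¹)^3 * ((conj (Δ p))⁻¹)^3 * (Ups Δ Λ₁ Λ₂ Λ p) * (pd 0 Δ p) + (-1:ℂ) * (conj (Δ p)) * ((Δ p)⁻¹)^3 * ((conj (Δ p))⁻¹)^3 * (I) * (Ups Δ Λ₁ Λ₂ Λ p) * (pd 1 Δ p) + (-2:ℂ) * (conj (Δ p)) * ((Δ p)⁻¹)^3 * ((conj (Δ p))⁻¹)^4 * (Ups Δ Λ₁ Λ₂ Λ p) * (Λ₂ p) * (pd 3 (fun q => conj (Δ q)) p) + (-2:ℂ) * (conj (Δ p)) * ((Δ p)⁻¹)^3 * ((conj (Δ p))⁻¹)^4 * (Ups Δ Λ₁ Λ₂ Λ p) * (Λ₁ p) * (pd 2 (fun q => conj (Δ q)) p) + (1/2:ℂ) * (conj (Δ p))^2 * ((Δ p)⁻¹)^2 * ((conj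 (Δ p))⁻¹)^4 * (pd 0 (Ups Δ Λ₁ Λ₂ Λ) p) + (-1/2:ℂ) * (conj (Δ p))^2 * ((Δ p)⁻¹)^2 * ((conj (Δ p))⁻¹)^4 * (I) * (pd 1 (Ups Δ Λ₁ Λ₂ Λ) p) + (conj (Δ p))^2 * ((Δ p)⁻¹)^3 * ((conj (Δ p))⁻¹)^4 * (Λ₂ p) * (pd 3 (Ups Δ Λ₁ Λ₂ Λ) p) + (conj (Δ p))^2 * ((Δ p)⁻¹)^3 * ((conj (Δ p))⁻¹)^4 * (Λ₁ p) * (pd 2 (Ups Δ Λ₁ Λ₂ Λ) p) + (-1:ℂ) * (conj (Δ p))^2 * ((Δ p)⁻¹)^3 * ((conj (Δ p))⁻¹)^4 * (Ups Δ Λ₁ Λ₂ Λ p) * (pd 0 Δ p) + (conj (Δ p))^2 * ((Δ p)⁻¹)^3 * ((conj (Δ p))⁻¹)^4 * (I) * (Ups Δ Λ₁ Λ₂ Λ p) * (pd 1 Δ p) + (-2:ℂ) * (conj (Δ p))^2 * ((Δ p)⁻¹)^4 * ((conj (Δ p))⁻¹)^4 * (Ups Δ Λ₁ Λ₂ Λ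 p) * (Λ₂ p) * (pd 3 Δ p) + (-2:ℂ) * (conj (Δ p))^2 * ((Δ p)⁻¹)^4 * ((conj (Δ p))⁻¹)^4 * (Ups Δ Λ₁ Λ₂ Λ p) * (Λ₁ p) * (pd 2 Δ p) + (Δ p) * ((Δ p)⁻¹)^3 * ((conj (Δ p))⁻¹)^3 * (Ups Δ Λ₁ Λ₂ Λ p) * (pd 0 (fun q => conj (Δ q)) p) + (-1:ℂ) * (Δ p) * ((Δ p)⁻¹)^3 * ((conj (Δ p))⁻¹)^3 * (I) * (Ups Δ Λ₁ Λ₂ Λ p) * (pd 1 (fun q => conj (Δ q)) p) + (-1/2:ℂ) * (Δ p) * (conj (Δ p)) * ((Δ p)⁻¹)^3 * ((conj (Δ p))⁻¹)^3 * (pd 0 (Ups Δ Λ₁ Λ₂ Λ) p) + (1/2:ℂ) * (Δ p) * (conj (Δ p)) * ((Δ p)⁻¹)^3 * ((conj (Δ p))⁻¹)^3 * (I) * (pd 1 (Ups Δ Λ₁ Λ₂ Λ) p) + (-1:ℂ) * (Δ p) * (conj (Δ p)) * ((Δ p)⁻¹)^3 * ((conj (Δ p))⁻¹)^4 * (Ups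 Δ Λ₁ Λ₂ Λ p) * (pd 0 (fun q => conj (Δ q)) p) + (Δ p) * (conj (Δ p)) * ((Δ p)⁻¹)^3 * ((conj (Δ p))⁻¹)^4 * (I) * (Ups Δ Λ₁ Λ₂ Λ p) * (pd 1 (fun q => conj (Δ q)) p) + (-2:ℂ) * (Δ p) * (conj (Δ p)) * ((Δ p)⁻¹)^4 * ((conj (Δ p))⁻¹)^4 * (Ups Δ Λ₁ Λ₂ Λ p) * (Λ₂ p) * (pd 3 (fun q => conj (Δ q)) p) + (-2:ℂ) * (Δ p) * (conj (Δ p)) * ((Δ p)⁻¹)^4 * ((conj (Δ p))⁻¹)^4 * (Ups Δ Λ₁ Λ₂ Λ p) * (Λ₁ p) * (pd 2 (fun q => conj (Δ q)) p) + (1/2:ℂ) * (Δ p) * (conj (Δ p))^2 * ((Δ p)⁻¹)^3 * ((conj (Δ p))⁻¹)^4 * (pd 0 (Ups Δ Λ₁ Λ₂ Λ) p) + (-1/2:ℂ) * (Δ p) * (conj (Δ p))^2 * ((Δ p)⁻¹)^3 * ((conj (Δ p))⁻¹)^4 * (I) * (pd 1 (Ups Δ Λ₁ Λ₂ Λ)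 p) + (Δ p) * (conj (Δ p))^2 * ((Δ p)⁻¹)^4 * ((conj (Δ p))⁻¹)^4 * (Λ₂ p) * (pd 3 (Ups Δ Λ₁ Λ₂ Λ) p) + (Δ p) * (conj (Δ p))^2 * ((Δ p)⁻¹)^4 * ((conj (Δ p))⁻¹)^4 * (Λ₁ p) * (pd 2 (Ups Δ Λ₁ Λ₂ Λ) p))) * mul_inv_cancel₀ (hΔ0 p) + (((-1:ℂ) * ((Δ p)⁻¹)^2 * ((conj (Δ p))⁻¹)^3 * (Ups Δ Λ₁ Λ₂ Λ p) * (pd 0 (fun q => conj (Δ q)) p) + ((Δ p)⁻¹)^2 * ((conj (Δ p))⁻¹)^3 * (I) * (Ups Δ Λ₁ Λ₂ Λ p) * (pd 1 (fun q => conj (Δ q)) p) + ((Δ p)⁻¹)^3 * ((conj (Δ p))⁻¹)^2 * (Ups Δ Λ₁ Λ₂ Λ₂ p) * (pd 3 Λ p) + ((Δ p)⁻¹)^3 * ((conj (Δ p))⁻¹)^2 * (Ups Δ Λ₁ Λ₂ Λ₁ p) * (pd 2 Λ p) + (-2:ℂ) * ((Δ p)⁻¹)^3 * ((conj (Δ p))⁻¹)^3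 * (Ups Δ Λ₁ Λ₂ Λ p) * (Λ₂ p) * (pd 3 (fun q => conj (Δ q)) p) + (-2:ℂ) * ((Δ p)⁻¹)^3 * ((conj (Δ p))⁻¹)^3 * (Ups Δ Λ₁ Λ₂ Λ p) * (Λ₁ p) * (pd 2 (fun q => conj (Δ q)) p) + (-1:ℂ) * ((Δ p)⁻¹)^4 * ((conj (Δ p))⁻¹)^2 * (Ups Δ Λ₁ Λ₂ Λ₂ p) * (Λ p) * (pd 3 Δ p) + (-1:ℂ) * ((Δ p)⁻¹)^4 * ((conj (Δ p))⁻¹)^2 * (Ups Δ Λ₁ Λ₂ Λ₁ p) * (Λ p) * (pd 2 Δ p) + (1/2:ℂ) * (conj (Δ p)) * ((Δ p)⁻¹)^2 * ((conj (Δ p))⁻¹)^3 * (pd 0 (Ups Δ Λ₁ Λ₂ Λ) p) + (-1/2:ℂ) * (conj (Δ p)) * ((Δ p)⁻¹)^2 * ((conj (Δ p))⁻¹)^3 * (I) * (pd 1 (Ups Δ Λ₁ Λ₂ Λ) p) + (conj (Δ p)) * ((Δ p)⁻¹)^3 * ((conj (Δ p))⁻¹)^3 * (Λ₂ p) * (pd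 3 (Ups Δ Λ₁ Λ₂ Λ) p) + (conj (Δ p)) * ((Δ p)⁻¹)^3 * ((conj (Δ p))⁻¹)^3 * (Λ₁ p) * (pd 2 (Ups Δ Λ₁ Λ₂ Λ) p) + (-1:ℂ) * (conj (Δ p)) * ((Δ p)⁻¹)^3 * ((conj (Δ p))⁻¹)^3 * (Ups Δ Λ₁ Λ₂ Λ p) * (pd 0 Δ p) + (conj (Δ p)) * ((Δ p)⁻¹)^3 * ((conj (Δ p))⁻¹)^3 * (I) * (Ups Δ Λ₁ Λ₂ Λ p) * (pd 1 Δ p) + (-2:ℂ) * (conj (Δ p)) * ((Δ p)⁻¹)^4 * ((conj (Δ p))⁻¹)^3 * (Ups Δ Λ₁ Λ₂ Λ p) * (Λ₂ p) * (pd 3 Δ p) + (-2:ℂ) * (conj (Δ p)) * ((Δ p)⁻¹)^4 * ((conj (Δ p))⁻¹)^3 * (Ups Δ Λ₁ Λ₂ Λ p) * (Λ₁ p) * (pd 2 Δ p))) * mul_inv_cancel₀ hc0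

end Helper

open Helper in
set_option maxHeartbeats 1000000 in
/-- The Lemma giving `S = [L, T]` explicitly for General Class II:
`L(T f) − T(L f) = (Π₁/(Δ⁴ Δ̄³)) f_{u₁} + (Π₂/(Δ⁴ Δ̄³)) f_{u₂}`. -/
theorem class_II_S_explicit (hΔ : ContDiff ℝ 2 Δ) (hΛ₁ : ContDiff ℝ 2 Λ₁)
    (hΛ₂ : ContDiff ℝ 2 Λ₂) (hΔ0 : ∀ p, Δ p ≠ 0) :
    ∀ f : V4 → ℂ, ContDiff ℝ 2 f → ∀ p,
      Lop Δ Λ₁ Λ₂ (Tof Δ Λ₁ Λ₂ f) p - Tof Δ Λ₁ Λ₂ (Lop Δ Λ₁ Λ₂ f) p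
        = Pii Δ Λ₁ Λ₂ Λ₁ p / (Δ p ^ 4 * conj (Δ p) ^ 3) * du1 f p
          + Pii Δ Λ₁ Λ₂ Λ₂ p / (Δ p ^ 4 * conj (Δ p) ^ 3) * du2 f p := by
  intro f hf p
  have hc0 : ∀ q, conj (Δ q) ≠ 0 := fun q => by simpa using hΔ0 q
  have hΔd : ∀ q, DifferentiableAt ℝ Δ q := fun q => hΔ.differentiable two_ne_zero q
  have hcΔd : ∀ q, DifferentiableAt ℝ (fun r => conj (Δ r)) q :=
    fun q => ((contDiff_conj hΔ).differentiable two_ne_zero) q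
  have hΛ₁d : ∀ q, DifferentiableAt ℝ Λ₁ q := fun q => hΛ₁.differentiable two_ne_zero q
  have hΛ₂d : ∀ q, DifferentiableAt ℝ Λ₂ q := fun q => hΛ₂.differentiable two_ne_zero q
  have hDd : ∀ q, DifferentiableAt ℝ (fun r => Δ r ^ 2 * conj (Δ r) ^ 2) q :=
    fun q => ((hΔd q).pow 2).mul ((hcΔd q).pow 2)
  have hD0 : ∀ q, Δ q ^ 2 * conj (Δ q) ^ 2 ≠ 0 :=
    fun q => mul_ne_zero (pow_ne_zero _ (hΔ0 q)) (pow_ne_zero _ (hc0 q))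
  have hU₁d : ∀ q, DifferentiableAt ℝ (Ups Δ Λ₁ Λ₂ Λ₁) q :=
    fun q => ((contDiff_Ups Δ Λ₁ Λ₂ hΔ hΛ₁ hΛ₂ hΛ₁).differentiable one_ne_zero) q
  have hU₂d : ∀ q, DifferentiableAt ℝ (Ups Δ Λ₁ Λ₂ Λ₂) q :=
    fun q => ((contDiff_Ups Δ Λ₁ Λ₂ hΔ hΛ₁ hΛ₂ hΛ₂).differentiable one_ne_zero) q
  have hA₁d : DifferentiableAt ℝ (fun q => Ups Δ Λ₁ Λ₂ Λ₁ q / (Δ q ^ 2 * conj (Δ q) ^ 2)) p :=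
    by simp only [div_eq_mul_inv]; exact (hU₁d p).mul (DifferentiableAt.inv (hDd p) (hD0 p))
  have hA₂d : DifferentiableAt ℝ (fun q => Ups Δ Λ₁ Λ₂ Λ₂ q / (Δ q ^ 2 * conj (Δ q) ^ 2)) p :=
    by simp only [div_eq_mul_inv]; exact (hU₂d p).mul (DifferentiableAt.inv (hDd p) (hD0 p))
  have hfj : ∀ (j : Fin 4) q, DifferentiableAt ℝ (pd j f) q := fun j q => diffAt_pd hf j q
  have hT : ∀ j : Fin 4,
      pd j (fun q => Ups Δ Λ₁ Λ₂ Λ₁ q / (Δ q ^ 2 * conj (Δ q) ^ 2) * pd 2 f q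
        + Ups Δ Λ₁ Λ₂ Λ₂ q / (Δ q ^ 2 * conj (Δ q) ^ 2) * pd 3 f q) p
      = pd j (fun q => Ups Δ Λ₁ Λ₂ Λ₁ q / (Δ q ^ 2 * conj (Δ q) ^ 2)) p * pd 2 f p
        + Ups Δ Λ₁ Λ₂ Λ₁ p / (Δ p ^ 2 * conj (Δ p) ^ 2) * pd j (pd 2 f) p
        + pd j (fun q => Ups Δ Λ₁ Λ₂ Λ₂ q / (Δ q ^ 2 * conj (Δ q) ^ 2)) p * pd 3 f p
        + Ups Δ Λ₁ Λ₂ Λ₂ p / (Δ p ^ 2 * conj (Δ p) ^ 2) * pd j (pd 3 f) p := by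
    intro j
    rw [pd_add (hA₁d.fun_mul (hfj 2 p)) (hA₂d.fun_mul (hfj 3 p)),
      pd_mul hA₁d (hfj 2 p), pd_mul hA₂d (hfj 3 p)]
    ring
  have hq₁d : DifferentiableAt ℝ (fun q => Λ₁ q / Δ q) p := by simp only [div_eq_mul_inv]; exact (hΛ₁d p).mul (DifferentiableAt.inv (hΔd p) (hΔ0 p))
  have hq₂d : DifferentiableAt ℝ (fun q => Λ₂ q / Δ q) p := by simp only [div_eq_mul_inv]; exact (hΛ₂d p).mul (DifferentiableAt.inv (hΔd p) (hΔ0 p))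
  have hwd : DifferentiableAt ℝ (fun q => (pd 0 f q - I * pd 1 f q) / 2) p :=
    by simp only [div_eq_mul_inv]
       exact ((hfj 0 p).sub ((differentiableAt_const I).mul (hfj 1 p))).mul
         (differentiableAt_const _)
  have hL : ∀ j : Fin 4,
      pd j (fun q => (pd 0 f q - I * pd 1 f q) / 2
        + Λ₁ q / Δ q * pd 2 f q + Λ₂ q / Δ q * pd 3 f q) p
      = (pd j (pd 0 f) p - I * pd j (pd 1 f) p) / 2
        + pd j (fun q => Λ₁ q / Δ q) p * pd 2 f p + Λ₁ p / Δ p * pd j (pd 2 f) p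
        + pd j (fun q => Λ₂ q / Δ q) p * pd 3 f p + Λ₂ p / Δ p * pd j (pd 3 f) p := by
    intro j
    rw [pd_add (hwd.fun_add (hq₁d.fun_mul (hfj 2 p))) (hq₂d.fun_mul (hfj 3 p)),
      pd_add hwd (hq₁d.fun_mul (hfj 2 p)),
      pd_mul hq₁d (hfj 2 p), pd_mul hq₂d (hfj 3 p),
      pd_div_const 2 ((hfj 0 p).fun_sub ((differentiableAt_const I).fun_mul (hfj 1 p))),
      pd_sub (hfj 0 p) ((differentiableAt_const I).fun_mul (hfj 1 p)),
      pd_const_mul I (hfj 1 p)]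
    ring
  have hc₁ := coeff Δ Λ₁ Λ₂ hΔ hΛ₁ hΛ₂ hΛ₁ hΔ0 p
  have hc₂ := coeff Δ Λ₁ Λ₂ hΔ hΛ₁ hΛ₂ hΛ₂ hΔ0 p
  have eT : Tof Δ Λ₁ Λ₂ f = fun q =>
      Ups Δ Λ₁ Λ₂ Λ₁ q / (Δ q ^ 2 * conj (Δ q) ^ 2) * pd 2 f q
        + Ups Δ Λ₁ Λ₂ Λ₂ q / (Δ q ^ 2 * conj (Δ q) ^ 2) * pd 3 f q := rfl
  have eL : Lop Δ Λ₁ Λ₂ f = fun q =>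
      (pd 0 f q - I * pd 1 f q) / 2 + Λ₁ q / Δ q * pd 2 f q + Λ₂ q / Δ q * pd 3 f q := rfl
  simp only [Lop, Tof, wz, du1, du2]
  rw [eT, eL]
  rw [hT 0, hT 1, hT 2, hT 3, hL 2, hL 3,
    pd_symm hf 2 0 p, pd_symm hf 2 1 p, pd_symm hf 3 0 p, pd_symm hf 3 1 p,
    pd_symm hf 3 2 p]
  linear_combination hc₁ * pd 2 f p + hc₂ * pd 3 f p


end
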